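/- Let G be a finite simple graph with vertex set V and edge set E, and assume E ≠ ∅. A matching of G is a set M ⊆ E of edges no two of which share an endpoint; M is perfect if every vertex of G is covered by an edge of M. Let the matching polytope of G be the convex hull in ℝ^E of the incidence vectors of all matchings, and the perfect matching polytope the convex hull of the incidence vectors of all perfect matchings. Then there exist block configurations B and B′ (in suitable 𝔽₂^d) of size |V| + 2|E| and of size 2|E|, respectively, such that CTP[B] is affinely isomorphic to the matching polytope of G and CTP[B′] is affinely isomorphic to the perfect matching polytope of G. -/

import Mathlib

open scoped Classical

/-- The field `𝔽₂^d`, represented as functions `Fin d → ZMod 2`. -/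
abbrev F2 (d : ℕ) : Type := Fin d → ZMod 2

/-- A cyclic transversal of a block configuration `B`. -/
def IsCyclicTransversal {d n : ℕ} (B : Fin n → Set (F2 d)) (ξ : Fin n → F2 d) : Prop :=
  (∀ i, ξ i ∈ B i) ∧ (∑ i, ξ i) = 0

/-- The incidence vector of a transversal. -/
noncomputable def incVec {d n : ℕ} (ξ : Fin n → F2 d) : Fin n → F2 d → ℝ :=
  fun i ω => if ξ i = ω then 1 else 0

/-- The cyclic transversal polytope of a block configuration. -/
noncomputable def CTP {d n : ℕ} (B : Fin n → Set (F2 d)) : Set (Fin n → F2 d → ℝ) :=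
  convexHull ℝ (incVec '' { ξ | IsCyclicTransversal B ξ })

/-- The transversal polytope of a block configuration. -/
def TP {d n : ℕ} (B : Fin n → Set (F2 d)) : Set (Fin n → F2 d → ℝ) :=
  { x | (∀ i ω, 0 ≤ x i ω) ∧ (∀ i ω, ω ∉ B i → x i ω = 0) ∧ ∀ i, (∑ ω : F2 d, x i ω) = 1 }

/-- The size of a block configuration. -/
noncomputable def blockSize {d n : ℕ} (B : Fin n → Set (F2 d)) : ℕ := ∑ i, (B i).ncard

/-- The rank of a block configuration. -/
noncomputable def blockRank {d n : ℕ} (B : Fin n → Set (F2 d)) : ℕ :=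
  Module.finrank (ZMod 2) (Submodule.span (ZMod 2) (⋃ i, B i))

/-- Two sets of real vectors are affinely isomorphic. -/
def AffIso {α β : Type*} [AddCommGroup α] [Module ℝ α] [AddCommGroup β] [Module ℝ β]
    (P : Set α) (Q : Set β) : Prop :=
  ∃ f : α →ᵃ[ℝ] β, Set.InjOn f P ∧ f '' P = Q

/-- The left-hand side of the lifted odd-set (LOS) inequality associated with `η` and `I`. -/
noncomputable def losLHS {d n : ℕ} (B : Fin n → Set (F2 d)) (η : F2 d) (I : Finset (Fin n))
    (x : Fin n → F2 d → ℝ) : ℝ :=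
  (∑ i ∈ I, ∑ ω ∈ Finset.univ.filter (fun ω : F2 d => ω ∈ B i ∧ (∑ j, η j * ω j) = 0), x i ω) +
  (∑ i ∈ Iᶜ, ∑ ω ∈ Finset.univ.filter (fun ω : F2 d => ω ∈ B i ∧ (∑ j, η j * ω j) = 1), x i ω)


section main
set_option linter.unusedSectionVars false
set_option maxHeartbeats 1000000
variable {V : Type} [Fintype V] [DecidableEq V] (G : SimpleGraph V) [DecidableRel G.Adj]
variable {d n : ℕ} (ιE : G.edgeSet ≃ Fin d) (κ : V ≃ Fin n)

noncomputable def chi (e : G.edgeSet) : Fin d → ZMod 2 := fun j => if j = ιE e then 1 else 0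

lemma chi_ne_zero (e : G.edgeSet) : chi G ιE e ≠ 0 := by
  intro h
  have := congrFun h (ιE e)
  simp [chi] at this

lemma chi_inj : Function.Injective (chi G ιE) := by
  intro e e' h
  have := congrFun h (ιE e)
  simp [chi] at this
  exact this

lemma chi_apply (e e' : G.edgeSet) : chi G ιE e (ιE e') = if e = e' then 1 else 0 := by
  simp [chi, ιE.injective.eq_iff, eq_comm]

lemma endpoints_card (e : G.edgeSet) :
    (Finset.univ.filter (fun i : Fin n => κ.symm i ∈ (e : Sym2 V))).card = 2 := by
  obtain ⟨⟨u, w⟩, huw'⟩ := Quot.exists_rep (e : Sym2 V)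
  have huw : s(u, w) = (e : Sym2 V) := huw'
  have hne : u ≠ w := by
    have := G.not_isDiag_of_mem_edgeSet e.2
    rw [← huw] at this
    simpa [Sym2.isDiag_iff_proj_eq] using this
  have : Finset.univ.filter (fun i : Fin n => κ.symm i ∈ (e : Sym2 V)) = {κ u, κ w} := by
    ext i
    simp [← huw, Sym2.mem_iff]
    constructor
    · rintro (h | h)
      · left; rw [← h]; simp
      · right; rw [← h]; simp
    · rintro (h | h) <;> simp [h]
  rw [this]
  rw [Finset.card_insert_of_notMem (by simp [κ.injective.eq_iff, hne]), Finset.card_singleton]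

lemma val_at (ξ : Fin n → (Fin d → ZMod 2))
    (hmem : ∀ i, ξ i = 0 ∨ ∃ e : G.edgeSet, κ.symm i ∈ (e : Sym2 V) ∧ ξ i = chi G ιE e)
    (i : Fin n) (e : G.edgeSet) :
    ξ i (ιE e) = if ξ i = chi G ιE e then 1 else 0 := by
  rcases hmem i with h | ⟨e', _, h⟩
  · rw [h]
    have : (0 : Fin d → ZMod 2) ≠ chi G ιE e := (chi_ne_zero G ιE e).symm
    simp [this]
  · rw [h, chi_apply]
    by_cases he : e' = e
    · simp [he]
    · have : chi G ιE e' ≠ chi G ιE e := fun hc => he ((chi_inj G ιE) hc)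
      simp [he, this, Ne.symm he]

lemma card_even (ξ : Fin n → (Fin d → ZMod 2))
    (hmem : ∀ i, ξ i = 0 ∨ ∃ e : G.edgeSet, κ.symm i ∈ (e : Sym2 V) ∧ ξ i = chi G ιE e)
    (hsum : ∑ i, ξ i = 0) (e : G.edgeSet) :
    2 ∣ (Finset.univ.filter (fun i => ξ i = chi G ιE e)).card := by
  have h0 : (∑ i, ξ i) (ιE e) = 0 := by rw [hsum]; rfl
  rw [Finset.sum_apply] at h0
  have : ∑ i, ξ i (ιE e) = ((Finset.univ.filter (fun i => ξ i = chi G ιE e)).card : ZMod 2) := by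
    rw [Finset.card_filter]
    push_cast
    exact Finset.sum_congr rfl (fun i _ => by simp [val_at G ιE κ ξ hmem i e])
  rw [this] at h0
  exact (ZMod.natCast_eq_zero_iff _ 2).mp h0

lemma key (ξ : Fin n → (Fin d → ZMod 2))
    (hmem : ∀ i, ξ i = 0 ∨ ∃ e : G.edgeSet, κ.symm i ∈ (e : Sym2 V) ∧ ξ i = chi G ιE e)
    (hsum : ∑ i, ξ i = 0) (e : G.edgeSet) (i : Fin n) (hi : ξ i = chi G ιE e) :
    ∀ j, κ.symm j ∈ (e : Sym2 V) → ξ j = chi G ιE e := by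
  set A := Finset.univ.filter (fun i => ξ i = chi G ιE e) with hA
  set E2 := Finset.univ.filter (fun i : Fin n => κ.symm i ∈ (e : Sym2 V)) with hE2
  have hsub : A ⊆ E2 := by
    intro i' hi'
    rw [hA, Finset.mem_filter] at hi'
    rcases hmem i' with h | ⟨e', hmem', h⟩
    · exact absurd (hi'.2.symm.trans h) (chi_ne_zero G ιE e)
    · have : e' = e := chi_inj G ιE (h ▸ hi'.2)
      rw [hE2, Finset.mem_filter]
      exact ⟨Finset.mem_univ _, this ▸ hmem'⟩
  have hcard2 : E2.card = 2 := endpoints_card G κ e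
  have heven : 2 ∣ A.card := card_even G ιE κ ξ hmem hsum e
  have hpos : 0 < A.card := Finset.card_pos.mpr ⟨i, by simp [hA, hi]⟩
  have hle : A.card ≤ 2 := hcard2 ▸ Finset.card_le_card hsub
  have hAE : A = E2 := Finset.eq_of_subset_of_card_le hsub (by omega)
  intro j hj
  have : j ∈ A := hAE ▸ (by simp [hE2, hj])
  simpa [hA] using (Finset.mem_filter.mp this).2

noncomputable def pt (e : G.edgeSet) : V := (Quot.out (e : Sym2 V)).1

lemma pt_mem (e : G.edgeSet) : pt G e ∈ (e : Sym2 V) := Sym2.out_fst_mem _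

noncomputable def incSet (i : Fin n) (ω : Fin d → ZMod 2) : Finset G.edgeSet :=
  Finset.univ.filter (fun e => κ.symm i ∈ (e : Sym2 V) ∧ ω = chi G ιE e)

noncomputable def inc (i : Fin n) : Finset G.edgeSet :=
  Finset.univ.filter (fun e => κ.symm i ∈ (e : Sym2 V))

noncomputable def fmap : ((Fin n → (Fin d → ZMod 2) → ℝ) →ₗ[ℝ] (G.edgeSet → ℝ)) where
  toFun := fun x e => x (κ (pt G e)) (chi G ιE e)
  map_add' := fun _ _ => rfl
  map_smul' := fun _ _ => rfl

noncomputable def M0 (ξ : Fin n → (Fin d → ZMod 2)) : Finset G.edgeSet :=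
  Finset.univ.filter (fun e => ξ (κ (pt G e)) = chi G ιE e)

lemma sel (ξ : Fin n → (Fin d → ZMod 2))
    (hmem : ∀ i, ξ i = 0 ∨ ∃ e : G.edgeSet, κ.symm i ∈ (e : Sym2 V) ∧ ξ i = chi G ιE e)
    (hsum : ∑ i, ξ i = 0) (e : G.edgeSet) (i : Fin n) (hinc : κ.symm i ∈ (e : Sym2 V)) :
    ξ i = chi G ιE e ↔ e ∈ M0 G ιE κ ξ := by
  constructor
  · intro h
    have := key G ιE κ ξ hmem hsum e i h (κ (pt G e)) (by simpa using pt_mem G e)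
    simpa [M0] using this
  · intro h
    have h' : ξ (κ (pt G e)) = chi G ιE e := by simpa [M0] using h
    exact key G ιE κ ξ hmem hsum e (κ (pt G e)) h' i hinc

lemma f_incVec (ξ : Fin n → (Fin d → ZMod 2)) :
    fmap G ιE κ (fun i ω => if ξ i = ω then (1:ℝ) else 0) =
      fun e => if e ∈ M0 G ιE κ ξ then (1:ℝ) else 0 := by
  funext e
  simp [fmap, M0]

lemma incSet_zero (i : Fin n) : incSet G ιE κ i 0 = ∅ := by
  ext e
  simp [incSet]
  intro _
  exact fun h => chi_ne_zero G ιE e h.symm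

lemma incSet_chi (i : Fin n) (e : G.edgeSet) (h : κ.symm i ∈ (e : Sym2 V)) :
    incSet G ιE κ i (chi G ιE e) = {e} := by
  ext e'
  simp only [incSet, Finset.mem_filter, Finset.mem_univ, true_and, Finset.mem_singleton]
  constructor
  · rintro ⟨_, h2⟩
    exact (chi_inj G ιE h2).symm
  · rintro rfl
    exact ⟨h, rfl⟩

lemma incSet_empty (i : Fin n) (ω : Fin d → ZMod 2)
    (h : ¬ ∃ e : G.edgeSet, κ.symm i ∈ (e : Sym2 V) ∧ ω = chi G ιE e) :
    incSet G ιE κ i ω = ∅ := by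
  ext e'
  simp only [incSet, Finset.mem_filter, Finset.mem_univ, true_and, Finset.notMem_empty,
    iff_false]
  exact fun hc => h ⟨e', hc⟩

noncomputable def gLinM : ((G.edgeSet → ℝ) →ₗ[ℝ] (Fin n → (Fin d → ZMod 2) → ℝ)) where
  toFun := fun y i ω => (∑ e ∈ incSet G ιE κ i ω, y e) -
    (if ω = 0 then ∑ e ∈ inc G κ i, y e else 0)
  map_add' := by
    intro y z
    funext i ω
    simp only [Pi.add_apply, Finset.sum_add_distrib]
    split_ifs <;> ring
  map_smul' := by
    intro c y
    funext i ω
    simp only [Pi.smul_apply, smul_eq_mul, RingHom.id_apply, ← Finset.mul_sum]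
    split_ifs <;> ring

noncomputable def gM : ((G.edgeSet → ℝ) →ᵃ[ℝ] (Fin n → (Fin d → ZMod 2) → ℝ)) where
  toFun := fun y => gLinM G ιE κ y + (fun _ ω => if ω = 0 then (1:ℝ) else 0)
  linear := gLinM G ιE κ
  map_vadd' := by
    intro p v
    simp only [vadd_eq_add, map_add]
    abel

lemma g_eval (ξ : Fin n → (Fin d → ZMod 2))
    (hmem : ∀ i, ξ i = 0 ∨ ∃ e : G.edgeSet, κ.symm i ∈ (e : Sym2 V) ∧ ξ i = chi G ιE e)
    (hsum : ∑ i, ξ i = 0) :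
    gM G ιE κ (fun e => if e ∈ M0 G ιE κ ξ then (1:ℝ) else 0) =
      fun i ω => if ξ i = ω then (1:ℝ) else 0 := by
  funext i ω
  show (∑ e ∈ incSet G ιE κ i ω, (if e ∈ M0 G ιE κ ξ then (1:ℝ) else 0)) -
    (if ω = 0 then ∑ e ∈ inc G κ i, (if e ∈ M0 G ιE κ ξ then (1:ℝ) else 0) else 0) +
    (if ω = 0 then (1:ℝ) else 0) = (if ξ i = ω then (1:ℝ) else 0)
  by_cases hω : ω = 0
  · subst hω
    rw [incSet_zero, Finset.sum_empty, if_pos rfl, if_pos rfl]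
    by_cases hξ : ξ i = 0
    · rw [if_pos hξ]
      have : ∑ e ∈ inc G κ i, (if e ∈ M0 G ιE κ ξ then (1:ℝ) else 0) = 0 := by
        apply Finset.sum_eq_zero
        intro e he
        rw [if_neg]
        intro hM
        have hinc : κ.symm i ∈ (e : Sym2 V) := (Finset.mem_filter.mp he).2
        have := (sel G ιE κ ξ hmem hsum e i hinc).mpr hM
        exact chi_ne_zero G ιE e (hξ ▸ this.symm ▸ rfl)
      rw [this]; ring
    · rw [if_neg hξ]
      rcases hmem i with h | ⟨e0, hinc0, h0⟩
      · exact absurd h hξ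
      have : ∑ e ∈ inc G κ i, (if e ∈ M0 G ιE κ ξ then (1:ℝ) else 0) = 1 := by
        have hcongr : ∀ e ∈ inc G κ i,
            (if e ∈ M0 G ιE κ ξ then (1:ℝ) else 0) = (if e = e0 then (1:ℝ) else 0) := by
          intro e he
          have hinc : κ.symm i ∈ (e : Sym2 V) := (Finset.mem_filter.mp he).2
          congr 1
          apply propext
          constructor
          · intro hM
            have := (sel G ιE κ ξ hmem hsum e i hinc).mpr hM
            exact chi_inj G ιE (this.symm.trans h0).symm |>.symm ▸ rfl
          · rintro rfl
            exact (sel G ιE κ ξ hmem hsum _ i hinc).mp h0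
        rw [Finset.sum_congr rfl hcongr, Finset.sum_ite_eq' (inc G κ i) e0 (fun _ => (1:ℝ))]
        rw [if_pos (by simp [inc, hinc0])]
      rw [this]; ring
  · rw [if_neg hω, if_neg hω, sub_zero, add_zero]
    by_cases hex : ∃ e : G.edgeSet, κ.symm i ∈ (e : Sym2 V) ∧ ω = chi G ιE e
    · obtain ⟨e, hinc, rfl⟩ := hex
      rw [incSet_chi G ιE κ i e hinc, Finset.sum_singleton]
      congr 1
      apply propext
      exact ((sel G ιE κ ξ hmem hsum e i hinc)).symm.symm |>.symm
    · rw [incSet_empty G ιE κ i ω hex, Finset.sum_empty]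
      rw [if_neg]
      intro hc
      rcases hmem i with h | ⟨e', hinc', h'⟩
      · exact hω (hc ▸ h ▸ rfl)
      · exact hex ⟨e', hinc', hc ▸ h' ▸ rfl⟩

noncomputable def gLinP : ((G.edgeSet → ℝ) →ₗ[ℝ] (Fin n → (Fin d → ZMod 2) → ℝ)) where
  toFun := fun y i ω => ∑ e ∈ incSet G ιE κ i ω, y e
  map_add' := by
    intro y z
    funext i ω
    simp [Finset.sum_add_distrib]
  map_smul' := by
    intro c y
    funext i ω
    simp [Finset.mul_sum]

lemma g_eval_perfect (ξ : Fin n → (Fin d → ZMod 2))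
    (hmem : ∀ i, ∃ e : G.edgeSet, κ.symm i ∈ (e : Sym2 V) ∧ ξ i = chi G ιE e)
    (hsum : ∑ i, ξ i = 0) :
    gLinP G ιE κ (fun e => if e ∈ M0 G ιE κ ξ then (1:ℝ) else 0) =
      fun i ω => if ξ i = ω then (1:ℝ) else 0 := by
  have hmem' : ∀ i, ξ i = 0 ∨ ∃ e : G.edgeSet, κ.symm i ∈ (e : Sym2 V) ∧ ξ i = chi G ιE e :=
    fun i => Or.inr (hmem i)
  funext i ω
  show (∑ e ∈ incSet G ιE κ i ω, (if e ∈ M0 G ιE κ ξ then (1:ℝ) else 0)) =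
    (if ξ i = ω then (1:ℝ) else 0)
  by_cases hex : ∃ e : G.edgeSet, κ.symm i ∈ (e : Sym2 V) ∧ ω = chi G ιE e
  · obtain ⟨e, hinc, rfl⟩ := hex
    rw [incSet_chi G ιE κ i e hinc, Finset.sum_singleton]
    congr 1
    apply propext
    exact (sel G ιE κ ξ hmem' hsum e i hinc).symm
  · rw [incSet_empty G ιE κ i ω hex, Finset.sum_empty]
    rw [if_neg]
    intro hc
    obtain ⟨e', hinc', h'⟩ := hmem i
    exact hex ⟨e', hinc', hc ▸ h' ▸ rfl⟩

/-- The transversal built from a matching `M`. -/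
noncomputable def xi (M : Finset (Sym2 V)) : Fin n → (Fin d → ZMod 2) := fun i =>
  if h : ∃ e : G.edgeSet, (e : Sym2 V) ∈ M ∧ κ.symm i ∈ (e : Sym2 V) then chi G ιE h.choose
  else 0

lemma xi_mem (M : Finset (Sym2 V)) (i : Fin n) :
    xi G ιE κ M i = 0 ∨
      ∃ e : G.edgeSet, κ.symm i ∈ (e : Sym2 V) ∧ xi G ιE κ M i = chi G ιE e := by
  unfold xi
  split_ifs with h
  · exact Or.inr ⟨h.choose, h.choose_spec.2, rfl⟩
  · exact Or.inl rfl

lemma xi_eq_iff (M : Finset (Sym2 V))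
    (hmatch : ∀ e₁ ∈ M, ∀ e₂ ∈ M, e₁ ≠ e₂ → ∀ v : V, v ∈ e₁ → v ∉ e₂)
    (i : Fin n) (e0 : G.edgeSet) :
    xi G ιE κ M i = chi G ιE e0 ↔ ((e0 : Sym2 V) ∈ M ∧ κ.symm i ∈ (e0 : Sym2 V)) := by
  unfold xi
  split_ifs with h
  · constructor
    · intro hc
      have : h.choose = e0 := chi_inj G ιE hc
      exact this ▸ h.choose_spec
    · rintro ⟨hM, hinc⟩
      obtain ⟨hM', hinc'⟩ := h.choose_spec
      by_contra hne
      have hvalne : (h.choose : Sym2 V) ≠ (e0 : Sym2 V) :=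
        fun hval => hne (congrArg (chi G ιE) (Subtype.ext hval))
      exact hmatch _ hM' _ hM hvalne (κ.symm i) hinc' hinc
  · constructor
    · intro hc
      exact absurd hc.symm (chi_ne_zero G ιE e0)
    · rintro ⟨hM, hinc⟩
      exact absurd ⟨e0, hM, hinc⟩ h

lemma xi_sum (M : Finset (Sym2 V))
    (hmatch : ∀ e₁ ∈ M, ∀ e₂ ∈ M, e₁ ≠ e₂ → ∀ v : V, v ∈ e₁ → v ∉ e₂) :
    ∑ i, xi G ιE κ M i = 0 := by
  funext j
  rw [Finset.sum_apply]
  set e0 : G.edgeSet := ιE.symm j with he0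
  have hj : j = ιE e0 := by rw [he0, ιE.apply_symm_apply]
  have : ∑ i, xi G ιE κ M i j =
      ((Finset.univ.filter (fun i => xi G ιE κ M i = chi G ιE e0)).card : ZMod 2) := by
    rw [Finset.card_filter]
    push_cast
    exact Finset.sum_congr rfl (fun i _ => by
      rw [hj, val_at G ιE κ _ (xi_mem G ιE κ M) i e0])
  rw [this]
  show _ = (0 : ZMod 2)
  by_cases hM : (e0 : Sym2 V) ∈ M
  · have : Finset.univ.filter (fun i => xi G ιE κ M i = chi G ιE e0) =
        Finset.univ.filter (fun i : Fin n => κ.symm i ∈ (e0 : Sym2 V)) := by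
      ext i
      simp only [Finset.mem_filter, Finset.mem_univ, true_and]
      rw [xi_eq_iff G ιE κ M hmatch i e0]
      exact ⟨fun h => h.2, fun h => ⟨hM, h⟩⟩
    rw [this, endpoints_card G κ e0]
    decide
  · have : Finset.univ.filter (fun i => xi G ιE κ M i = chi G ιE e0) = ∅ := by
      ext i
      simp only [Finset.mem_filter, Finset.mem_univ, true_and, Finset.notMem_empty, iff_false]
      rw [xi_eq_iff G ιE κ M hmatch i e0]
      exact fun h => hM h.1
    rw [this]
    simp

lemma ncard_inc (v : V) : ({e : G.edgeSet | v ∈ (e : Sym2 V)}).ncard = G.degree v := by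
  have h1 : (Subtype.val '' {e : G.edgeSet | v ∈ (e : Sym2 V)}) = G.incidenceSet v := by
    ext s
    simp only [Set.mem_image, Set.mem_setOf_eq, SimpleGraph.incidenceSet]
    constructor
    · rintro ⟨e, he, rfl⟩
      exact ⟨e.2, he⟩
    · rintro ⟨hs, hv⟩
      exact ⟨⟨s, hs⟩, hv, rfl⟩
  have h2 := Set.ncard_image_of_injective {e : G.edgeSet | v ∈ (e : Sym2 V)}
    (Subtype.val_injective)
  rw [h1] at h2
  rw [← h2]
  rw [Set.ncard_eq_toFinset_card']
  rw [← SimpleGraph.card_incidenceFinset_eq_degree]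
  congr 1

end main

section halves
set_option linter.unusedSectionVars false
set_option maxHeartbeats 1000000
variable {V : Type} [Fintype V] [DecidableEq V] (G : SimpleGraph V) [DecidableRel G.Adj]
variable {d n : ℕ}

lemma affIso_hulls {α β : Type*} [AddCommGroup α] [Module ℝ α] [AddCommGroup β] [Module ℝ β]
    (T : Set α) (S : Set β) (f : α →ᵃ[ℝ] β) (g : β →ᵃ[ℝ] α)
    (hfT : ⇑f '' T = S) (hg : ∀ x ∈ T, g (f x) = x) :
    AffIso (convexHull ℝ T) (convexHull ℝ S) := by
  have hfix : ∀ x ∈ convexHull ℝ T, g (f x) = x := by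
    intro x hx
    have hconv : Convex ℝ {x | g (f x) = x} := by
      intro a ha b hb s t hs ht hst
      simp only [Set.mem_setOf_eq] at *
      have : (g.comp f) (s • a + t • b) = s • (g.comp f) a + t • (g.comp f) b :=
        Convex.combo_affine_apply hst
      simpa [AffineMap.comp_apply, ha, hb] using this
    exact convexHull_min (fun x hx => hg x hx) hconv hx
  refine ⟨f, ?_, ?_⟩
  · intro x hx y hy hxy
    calc x = g (f x) := (hfix x hx).symm
    _ = g (f y) := by rw [hxy]
    _ = y := hfix y hy
  · rw [AffineMap.image_convexHull, hfT]

lemma card_eq_n (κ : V ≃ Fin n) : n = Fintype.card V := by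
  rw [← Fintype.card_fin n]
  exact (Fintype.card_congr κ).symm

lemma half_matching (ιE : G.edgeSet ≃ Fin d) (κ : V ≃ Fin n) :
    ∃ B : Fin n → Set (F2 d), (∀ i, (B i).Nonempty) ∧
      blockSize B = Fintype.card V + 2 * G.edgeFinset.card ∧
      AffIso (CTP B)
        (convexHull ℝ { x : G.edgeSet → ℝ | ∃ M : Finset (Sym2 V),
          ↑M ⊆ G.edgeSet ∧
          (∀ e₁ ∈ M, ∀ e₂ ∈ M, e₁ ≠ e₂ → ∀ v : V, v ∈ e₁ → v ∉ e₂) ∧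
          x = fun e : G.edgeSet => if (e : Sym2 V) ∈ M then (1 : ℝ) else 0 }) := by
  set B : Fin n → Set (F2 d) :=
    fun i => insert (0 : F2 d) (chi G ιE '' {e : G.edgeSet | κ.symm i ∈ (e : Sym2 V)}) with hB
  have hmemB : ∀ (ξ : Fin n → F2 d), (∀ i, ξ i ∈ B i) →
      ∀ i, ξ i = 0 ∨ ∃ e : G.edgeSet, κ.symm i ∈ (e : Sym2 V) ∧ ξ i = chi G ιE e := by
    intro ξ h i
    rcases Set.mem_insert_iff.mp (h i) with h0 | ⟨e, he, hchi⟩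
    · exact Or.inl h0
    · exact Or.inr ⟨e, he, hchi.symm⟩
  refine ⟨B, fun i => ⟨0, Set.mem_insert _ _⟩, ?_, ?_⟩
  · -- block size
    unfold blockSize
    have hsize : ∀ i, (B i).ncard = 1 + G.degree (κ.symm i) := by
      intro i
      rw [hB]
      rw [Set.ncard_insert_of_notMem (by
          rintro ⟨e, -, hc⟩
          exact chi_ne_zero G ιE e hc) (Set.toFinite _)]
      rw [Set.ncard_image_of_injective _ (chi_inj G ιE), ncard_inc, add_comm]
    rw [Finset.sum_congr rfl (fun i _ => hsize i), Finset.sum_add_distrib]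
    rw [Finset.sum_const, Finset.card_univ, Fintype.card_fin, smul_eq_mul, mul_one]
    rw [Equiv.sum_comp κ.symm (fun v => G.degree v), SimpleGraph.sum_degrees_eq_twice_card_edges]
    rw [card_eq_n κ]
  · -- affine isomorphism
    unfold CTP
    apply affIso_hulls _ _ ((fmap G ιE κ).toAffineMap) (gM G ιE κ)
    · -- image equality
      apply Set.Subset.antisymm
      · rintro x ⟨-, ⟨ξ, hξ, rfl⟩, rfl⟩
        have hmem := hmemB ξ hξ.1
        have hsum := hξ.2
        have hfx : (fmap G ιE κ).toAffineMap (incVec ξ) =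
            fun e => if e ∈ M0 G ιE κ ξ then (1:ℝ) else 0 := f_incVec G ιE κ ξ
        refine ⟨(M0 G ιE κ ξ).image Subtype.val, ?_, ?_, ?_⟩
        · intro s hs
          simp only [Finset.coe_image, Set.mem_image, Finset.mem_coe] at hs
          obtain ⟨e, -, rfl⟩ := hs
          exact e.2
        · intro e₁ h1 e₂ h2 hne v hv1 hv2
          simp only [Finset.mem_image] at h1 h2
          obtain ⟨e₁', hM1, rfl⟩ := h1
          obtain ⟨e₂', hM2, rfl⟩ := h2
          have hv1' : κ.symm (κ v) ∈ (e₁' : Sym2 V) := by simpa using hv1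
          have hv2' : κ.symm (κ v) ∈ (e₂' : Sym2 V) := by simpa using hv2
          have k1 := (sel G ιE κ ξ hmem hsum e₁' (κ v) hv1').mpr hM1
          have k2 := (sel G ιE κ ξ hmem hsum e₂' (κ v) hv2').mpr hM2
          exact hne (congrArg Subtype.val (chi_inj G ιE (k1.symm.trans k2)))
        · rw [hfx]
          funext e
          congr 1
          apply propext
          constructor
          · intro h
            exact Finset.mem_image_of_mem _ h
          · intro h
            obtain ⟨e', he', hval⟩ := Finset.mem_image.mp h
            rwa [Subtype.ext hval] at he'
      · rintro x ⟨M, hMsub, hmatch, rfl⟩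
        have hmem := xi_mem G ιE κ M
        have hsum := xi_sum G ιE κ M hmatch
        refine ⟨incVec (xi G ιE κ M), ⟨xi G ιE κ M, ⟨?_, hsum⟩, rfl⟩, ?_⟩
        · intro i
          rcases hmem i with h | ⟨e, he, hchi⟩
          · rw [h]; exact Set.mem_insert _ _
          · rw [hchi]; exact Set.mem_insert_of_mem _ ⟨e, he, rfl⟩
        · have hfx : (fmap G ιE κ).toAffineMap (incVec (xi G ιE κ M)) =
              fun e => if e ∈ M0 G ιE κ (xi G ιE κ M) then (1:ℝ) else 0 := f_incVec G ιE κ _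
          rw [hfx]
          funext e
          congr 1
          apply propext
          have : e ∈ M0 G ιE κ (xi G ιE κ M) ↔ xi G ιE κ M (κ (pt G e)) = chi G ιE e := by
            simp [M0]
          rw [this, xi_eq_iff G ιE κ M hmatch]
          simp [pt_mem G e]
    · -- g ∘ f = id on vertices
      rintro x ⟨ξ, hξ, rfl⟩
      have hmem := hmemB ξ hξ.1
      have hfx : (fmap G ιE κ).toAffineMap (incVec ξ) =
          fun e => if e ∈ M0 G ιE κ ξ then (1:ℝ) else 0 := f_incVec G ιE κ ξ
      rw [hfx]
      exact g_eval G ιE κ ξ hmem hξ.2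

lemma half_perfect (ιE : G.edgeSet ≃ Fin d) (κ : V ≃ Fin n) (hcov : ∀ v : V, ∃ e : G.edgeSet, v ∈ (e : Sym2 V)) :
    ∃ B : Fin n → Set (F2 d), (∀ i, (B i).Nonempty) ∧
      blockSize B = 2 * G.edgeFinset.card ∧
      AffIso (CTP B)
        (convexHull ℝ { x : G.edgeSet → ℝ | ∃ M : Finset (Sym2 V),
          ↑M ⊆ G.edgeSet ∧
          (∀ e₁ ∈ M, ∀ e₂ ∈ M, e₁ ≠ e₂ → ∀ v : V, v ∈ e₁ → v ∉ e₂) ∧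
          (∀ v : V, ∃ e ∈ M, v ∈ e) ∧
          x = fun e : G.edgeSet => if (e : Sym2 V) ∈ M then (1 : ℝ) else 0 }) := by
  set B : Fin n → Set (F2 d) :=
    fun i => chi G ιE '' {e : G.edgeSet | κ.symm i ∈ (e : Sym2 V)} with hB
  have hmemB : ∀ (ξ : Fin n → F2 d), (∀ i, ξ i ∈ B i) →
      ∀ i, ∃ e : G.edgeSet, κ.symm i ∈ (e : Sym2 V) ∧ ξ i = chi G ιE e := by
    intro ξ h i
    obtain ⟨e, he, hchi⟩ := h i
    exact ⟨e, he, hchi.symm⟩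
  refine ⟨B, ?_, ?_, ?_⟩
  · intro i
    obtain ⟨e, he⟩ := hcov (κ.symm i)
    exact ⟨chi G ιE e, ⟨e, he, rfl⟩⟩
  · unfold blockSize
    have hsize : ∀ i, (B i).ncard = G.degree (κ.symm i) := by
      intro i
      rw [hB, Set.ncard_image_of_injective _ (chi_inj G ιE), ncard_inc]
    rw [Finset.sum_congr rfl (fun i _ => hsize i)]
    rw [Equiv.sum_comp κ.symm (fun v => G.degree v), SimpleGraph.sum_degrees_eq_twice_card_edges]
  · unfold CTP
    apply affIso_hulls _ _ ((fmap G ιE κ).toAffineMap) ((gLinP G ιE κ).toAffineMap)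
    · apply Set.Subset.antisymm
      · rintro x ⟨-, ⟨ξ, hξ, rfl⟩, rfl⟩
        have hmemE := hmemB ξ hξ.1
        have hmem : ∀ i, ξ i = 0 ∨ ∃ e : G.edgeSet, κ.symm i ∈ (e : Sym2 V) ∧ ξ i = chi G ιE e :=
          fun i => Or.inr (hmemE i)
        have hsum := hξ.2
        have hfx : (fmap G ιE κ).toAffineMap (incVec ξ) =
            fun e => if e ∈ M0 G ιE κ ξ then (1:ℝ) else 0 := f_incVec G ιE κ ξ
        refine ⟨(M0 G ιE κ ξ).image Subtype.val, ?_, ?_, ?_, ?_⟩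
        · intro s hs
          simp only [Finset.coe_image, Set.mem_image, Finset.mem_coe] at hs
          obtain ⟨e, -, rfl⟩ := hs
          exact e.2
        · intro e₁ h1 e₂ h2 hne v hv1 hv2
          simp only [Finset.mem_image] at h1 h2
          obtain ⟨e₁', hM1, rfl⟩ := h1
          obtain ⟨e₂', hM2, rfl⟩ := h2
          have hv1' : κ.symm (κ v) ∈ (e₁' : Sym2 V) := by simpa using hv1
          have hv2' : κ.symm (κ v) ∈ (e₂' : Sym2 V) := by simpa using hv2
          have k1 := (sel G ιE κ ξ hmem hsum e₁' (κ v) hv1').mpr hM1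
          have k2 := (sel G ιE κ ξ hmem hsum e₂' (κ v) hv2').mpr hM2
          exact hne (congrArg Subtype.val (chi_inj G ιE (k1.symm.trans k2)))
        · intro v
          obtain ⟨e, he, hchi⟩ := hmemE (κ v)
          have hv : v ∈ (e : Sym2 V) := by simpa using he
          have : e ∈ M0 G ιE κ ξ :=
            (sel G ιE κ ξ hmem hsum e (κ v) he).mp hchi
          exact ⟨(e : Sym2 V), Finset.mem_image_of_mem _ this, hv⟩
        · rw [hfx]
          funext e
          congr 1
          apply propext
          constructor
          · intro h
            exact Finset.mem_image_of_mem _ h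
          · intro h
            obtain ⟨e', he', hval⟩ := Finset.mem_image.mp h
            rwa [Subtype.ext hval] at he'
      · rintro x ⟨M, hMsub, hmatch, hperf, rfl⟩
        have hsum := xi_sum G ιE κ M hmatch
        refine ⟨incVec (xi G ιE κ M), ⟨xi G ιE κ M, ⟨?_, hsum⟩, rfl⟩, ?_⟩
        · intro i
          have hex : ∃ e : G.edgeSet, (e : Sym2 V) ∈ M ∧ κ.symm i ∈ (e : Sym2 V) := by
            obtain ⟨s, hsM, hvs⟩ := hperf (κ.symm i)
            exact ⟨⟨s, hMsub hsM⟩, hsM, hvs⟩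
          have : xi G ιE κ M i = chi G ιE hex.choose := by
            unfold xi
            rw [dif_pos hex]
          rw [this]
          exact ⟨hex.choose, hex.choose_spec.2, rfl⟩
        · have hfx : (fmap G ιE κ).toAffineMap (incVec (xi G ιE κ M)) =
              fun e => if e ∈ M0 G ιE κ (xi G ιE κ M) then (1:ℝ) else 0 := f_incVec G ιE κ _
          rw [hfx]
          funext e
          congr 1
          apply propext
          have : e ∈ M0 G ιE κ (xi G ιE κ M) ↔ xi G ιE κ M (κ (pt G e)) = chi G ιE e := by
            simp [M0]
          rw [this, xi_eq_iff G ιE κ M hmatch]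
          simp [pt_mem G e]
    · rintro x ⟨ξ, hξ, rfl⟩
      have hmemE := hmemB ξ hξ.1
      have hfx : (fmap G ιE κ).toAffineMap (incVec ξ) =
          fun e => if e ∈ M0 G ιE κ ξ then (1:ℝ) else 0 := f_incVec G ιE κ ξ
      rw [hfx]
      exact g_eval_perfect G ιE κ ξ hmemE hξ.2
end halves
/-- matching and perfect matching polytopes are CTPs. -/
theorem statement3 (V : Type) [Fintype V] [DecidableEq V] (G : SimpleGraph V)
    [DecidableRel G.Adj] (hE : G.edgeFinset.Nonempty) :
    (∃ d n : ℕ, 1 ≤ d ∧ 2 ≤ n ∧ ∃ B : Fin n → Set (F2 d),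
      (∀ i, (B i).Nonempty) ∧
      blockSize B = Fintype.card V + 2 * G.edgeFinset.card ∧
      AffIso (CTP B)
        (convexHull ℝ { x : G.edgeSet → ℝ | ∃ M : Finset (Sym2 V),
          ↑M ⊆ G.edgeSet ∧
          (∀ e₁ ∈ M, ∀ e₂ ∈ M, e₁ ≠ e₂ → ∀ v : V, v ∈ e₁ → v ∉ e₂) ∧
          x = fun e : G.edgeSet => if (e : Sym2 V) ∈ M then (1 : ℝ) else 0 })) ∧
    (∃ d n : ℕ, 1 ≤ d ∧ 2 ≤ n ∧ ∃ B : Fin n → Set (F2 d),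
      (∀ i, (B i).Nonempty) ∧
      blockSize B = 2 * G.edgeFinset.card ∧
      AffIso (CTP B)
        (convexHull ℝ { x : G.edgeSet → ℝ | ∃ M : Finset (Sym2 V),
          ↑M ⊆ G.edgeSet ∧
          (∀ e₁ ∈ M, ∀ e₂ ∈ M, e₁ ≠ e₂ → ∀ v : V, v ∈ e₁ → v ∉ e₂) ∧
          (∀ v : V, ∃ e ∈ M, v ∈ e) ∧
          x = fun e : G.edgeSet => if (e : Sym2 V) ∈ M then (1 : ℝ) else 0 })) := by
  have hcard : 2 ≤ Fintype.card V := by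
    obtain ⟨s, hs⟩ := hE
    have hsE : s ∈ G.edgeSet := SimpleGraph.mem_edgeFinset.mp hs
    obtain ⟨⟨u, w⟩, huw'⟩ := Quot.exists_rep s
    have huw : s(u, w) = s := huw'
    have hne : u ≠ w := by
      have := G.not_isDiag_of_mem_edgeSet hsE
      rw [← huw] at this
      simpa [Sym2.isDiag_iff_proj_eq] using this
    exact Fintype.one_lt_card_iff.mpr ⟨u, w, hne⟩
  have hd1 : 1 ≤ G.edgeFinset.card := Finset.card_pos.mpr hE
  have hcardE : Fintype.card G.edgeSet = G.edgeFinset.card := (SimpleGraph.edgeFinset_card).symm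
  set d := G.edgeFinset.card with hd
  set n := Fintype.card V with hn
  have ιE : G.edgeSet ≃ Fin d := Fintype.equivFinOfCardEq hcardE
  have κ : V ≃ Fin n := Fintype.equivFin V
  constructor
  · obtain ⟨B, h1, h2, h3⟩ := half_matching G ιE κ
    exact ⟨d, n, hd1, hcard, B, h1, h2, h3⟩
  · by_cases hcov : ∀ v : V, ∃ e : G.edgeSet, v ∈ (e : Sym2 V)
    · obtain ⟨B, h1, h2, h3⟩ := half_perfect G ιE κ hcov
      exact ⟨d, n, hd1, hcard, B, h1, h2, h3⟩
    · -- degenerate case: some vertex is isolated, both polytopes are empty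
      push_neg at hcov
      obtain ⟨v0, hv0⟩ := hcov
      have hSempty : { x : G.edgeSet → ℝ | ∃ M : Finset (Sym2 V),
          ↑M ⊆ G.edgeSet ∧
          (∀ e₁ ∈ M, ∀ e₂ ∈ M, e₁ ≠ e₂ → ∀ v : V, v ∈ e₁ → v ∉ e₂) ∧
          (∀ v : V, ∃ e ∈ M, v ∈ e) ∧
          x = fun e : G.edgeSet => if (e : Sym2 V) ∈ M then (1 : ℝ) else 0 } = ∅ := by
        ext x
        simp only [Set.mem_setOf_eq, Set.mem_empty_iff_false, iff_false]
        rintro ⟨M, hMsub, -, hperf, -⟩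
        obtain ⟨s, hsM, hvs⟩ := hperf v0
        exact hv0 ⟨s, hMsub hsM⟩ hvs
      refine ⟨2 * d, 2, by omega, le_refl 2, ?_⟩
      set m := 2 * d with hm
      have hm1 : 1 ≤ m := by omega
      set ωf : Fin (m - 1) → F2 m := fun k j =>
        if (j : ℕ) = 0 ∨ (j : ℕ) = (k : ℕ) + 1 then 1 else 0 with hωf
      have h0m : 0 < m := by omega
      have hωinj : Function.Injective ωf := by
        intro k k' hkk
        by_contra hne
        have hk : (k : ℕ) ≠ (k' : ℕ) := fun h => hne (Fin.ext h)
        have hlt : (k : ℕ) + 1 < m := by omega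
        have h2 := congrFun hkk ⟨(k : ℕ) + 1, hlt⟩
        have e1 : ωf k ⟨(k : ℕ) + 1, hlt⟩ = 1 := by
          simp [hωf]
        have e2 : ωf k' ⟨(k : ℕ) + 1, hlt⟩ = 0 := by
          simp [hωf, hk]
        rw [e1, e2] at h2
        exact one_ne_zero h2
      have hωfst : ∀ k, ωf k ⟨0, h0m⟩ = 1 := by
        intro k
        simp [hωf]
      refine ⟨fun i => if i = 0 then Set.range ωf else {0}, ?_, ?_, ?_⟩
      · intro i
        by_cases hi : i = 0
        · subst hi
          exact ⟨ωf ⟨0, by omega⟩, by simp⟩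
        · exact ⟨0, by simp [hi]⟩
      · unfold blockSize
        rw [Fin.sum_univ_two]
        have h00 : (if (0 : Fin 2) = 0 then Set.range ωf else ({0} : Set (F2 m))) =
            Set.range ωf := if_pos rfl
        have h11 : (if (1 : Fin 2) = 0 then Set.range ωf else ({0} : Set (F2 m))) =
            ({0} : Set (F2 m)) := if_neg (by decide)
        show (if (0 : Fin 2) = 0 then Set.range ωf else ({0} : Set (F2 m))).ncard +
            (if (1 : Fin 2) = 0 then Set.range ωf else ({0} : Set (F2 m))).ncard = m
        rw [h00, h11, Set.ncard_singleton]
        have : (Set.range ωf).ncard = m - 1 := by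
          rw [← Set.image_univ, Set.ncard_image_of_injective _ hωinj, Set.ncard_univ]
          simp
        rw [this]
        omega
      · have hTempty : { ξ : Fin 2 → F2 m |
            IsCyclicTransversal (fun i => if i = 0 then Set.range ωf else {0}) ξ } = ∅ := by
          ext ξ
          simp only [Set.mem_setOf_eq, Set.mem_empty_iff_false, iff_false]
          rintro ⟨hmem, hsum⟩
          have h0 : ξ 0 ∈ Set.range ωf := by simpa using hmem 0
          have h1 : ξ 1 = 0 := by simpa using hmem 1
          obtain ⟨k, hk⟩ := h0
          have hne0 : ξ 0 ⟨0, h0m⟩ = 1 := by rw [← hk]; exact hωfst k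
          have hz : (∑ i, ξ i) ⟨0, h0m⟩ = 0 := by rw [hsum]; rfl
          rw [Fin.sum_univ_two, Pi.add_apply, hne0, h1] at hz
          simp at hz
        unfold CTP
        rw [hTempty, hSempty]
        simp only [Set.image_empty, convexHull_empty]
        exact ⟨AffineMap.const ℝ _ 0, fun x hx => absurd hx (Set.notMem_empty x),
          Set.image_empty _⟩
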